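/- For every x ∈ ℝ, lim_{ε→0⁺} (1/π)·Im[r(x + iε)] = (3/(4π))·√(max(8/3 − x², 0)); that is, the Stieltjes inverse formula applied to r recovers the semicircle density of compact support [−2√(2/3), 2√(2/3)]. -/

import Mathlib

open Topology Filter

lemma im_eq_sqrt_of_sq (u c : ℂ) (h : u ^ 2 = c) (him : 0 < u.im) :
    u.im = Real.sqrt ((‖c‖ - c.re) / 2) := by
  have h1 : ‖c‖ = u.re ^ 2 + u.im ^ 2 := by
    rw [← h, norm_pow, Complex.sq_norm, Complex.normSq_apply]; ring
  have h2 : c.re = u.re ^ 2 - u.im ^ 2 := by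
    rw [← h, pow_two, Complex.mul_re]; ring
  have h3 : (‖c‖ - c.re) / 2 = u.im ^ 2 := by rw [h1, h2]; ring
  rw [h3, Real.sqrt_sq him.le]

/-- **Stieltjes inverse formula for the semicircle law.** Let `r` be the Stieltjes transform of
the semicircle measure, i.e. for every `z` in the upper half-plane, `r z` is the (unique)
solution `w` of `(2/3) w² + z w + 1 = 0` with `Im w > 0`. Then for every real `x`,
`(1/π) Im r(x + iε) → (3/(4π)) √(max (8/3 − x²) 0)` as `ε → 0⁺`. -/
theorem stieltjes_inverse_semicircle (r : ℂ → ℂ)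
    (hr : ∀ z : ℂ, 0 < z.im →
      (2 / 3) * (r z) ^ 2 + z * r z + 1 = 0 ∧ 0 < (r z).im) :
    ∀ x : ℝ, Tendsto (fun ε : ℝ => (1 / Real.pi) * (r (x + ε * Complex.I)).im)
      (𝓝[>] 0) (𝓝 ((3 / (4 * Real.pi)) * Real.sqrt (max (8 / 3 - x ^ 2) 0))) := by
  intro x
  set g : ℝ → ℝ := fun ε =>
    (1 / Real.pi) * ((3 : ℝ) / 4 *
      (Real.sqrt ((‖((x : ℂ) + ε * Complex.I) ^ 2 - 8 / 3‖
        - (((x : ℂ) + ε * Complex.I) ^ 2 - 8 / 3).re) / 2) - ε)) with hg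
  have heq : Set.EqOn (fun ε : ℝ => (1 / Real.pi) * (r (x + ε * Complex.I)).im) g
      (Set.Ioi 0) := by
    intro ε hε
    have hε' : (0 : ℝ) < ε := hε
    set z : ℂ := (x : ℂ) + ε * Complex.I with hz
    have hzim : z.im = ε := by simp [hz]
    obtain ⟨h1, h2⟩ := hr z (by rw [hzim]; exact hε')
    set u : ℂ := (4 / 3) * r z + z with hu
    have hu2 : u ^ 2 = z ^ 2 - 8 / 3 := by
      rw [hu]; linear_combination (8 / 3 : ℂ) * h1
    have huim : u.im = (4 / 3) * (r z).im + ε := by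
      simp [hu, Complex.add_im, Complex.mul_im, hzim]
    have hupos : 0 < u.im := by rw [huim]; positivity
    have key := im_eq_sqrt_of_sq u (z ^ 2 - 8 / 3) hu2 hupos
    have hrim : (r z).im = 3 / 4 * (u.im - ε) := by rw [huim]; ring
    simp only [g]
    rw [hrim, key]
  have hlim : Tendsto g (𝓝[>] 0)
      (𝓝 ((3 / (4 * Real.pi)) * Real.sqrt (max (8 / 3 - x ^ 2) 0))) := by
    have hcont : Tendsto g (𝓝 0) (𝓝 (g 0)) := by
      apply Continuous.tendsto
      apply Continuous.mul continuous_const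
      apply Continuous.mul continuous_const
      apply Continuous.sub _ continuous_id
      apply Real.continuous_sqrt.comp
      apply Continuous.div_const
      apply Continuous.sub
      · exact continuous_norm.comp (by continuity)
      · exact Complex.continuous_re.comp (by continuity)
    have hg0 : g 0 = (3 / (4 * Real.pi)) * Real.sqrt (max (8 / 3 - x ^ 2) 0) := by
      have hc : ((x : ℂ) + (0 : ℝ) * Complex.I) ^ 2 - 8 / 3
          = ((x ^ 2 - 8 / 3 : ℝ) : ℂ) := by push_cast; ring
      simp only [g, hc, Complex.norm_real, Real.norm_eq_abs, Complex.ofReal_re]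
      have habs : (|x ^ 2 - 8 / 3| - (x ^ 2 - 8 / 3)) / 2 = max (8 / 3 - x ^ 2) 0 := by
        rcases le_or_gt 0 (x ^ 2 - 8 / 3) with h | h
        · rw [abs_of_nonneg h, max_eq_right (by linarith)]; ring
        · rw [abs_of_neg h, max_eq_left (by linarith)]; ring
      rw [habs]; ring
    rw [← hg0]
    exact hcont.mono_left nhdsWithin_le_nhds
  exact Tendsto.congr' (Filter.eventuallyEq_of_mem self_mem_nhdsWithin heq).symm hlim
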